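/- Let f : 2^N → ℤ be a normalized supermodular function with base-polyhedron B̄ and M-convex set B̈ = B̄ ∩ ℤ^N. For any x ∈ B̈, y ∈ B̄, and i ∈ supp⁺(x−y) = {k : x_k > y_k}, there exists j ∈ supp⁻(x−y) = {k : x_k < y_k} such that x − χ_i + χ_j ∈ B̈. -/

import Mathlib

open Finset

/-- The M-convex set of an integer-valued supermodular function. -/
def MSet {N : Type*} [Fintype N] (f : Finset N → ℤ) : Set (N → ℤ) :=
  {x | (∑ i, x i) = f Finset.univ ∧ ∀ X : Finset N, f X ≤ ∑ i ∈ X, x i}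

/-- The base-polyhedron of an integer-valued supermodular function. -/
def basePoly {N : Type*} [Fintype N] (f : Finset N → ℤ) : Set (N → ℝ) :=
  {y | (∑ i, y i) = f Finset.univ ∧ ∀ X : Finset N, (f X : ℝ) ≤ ∑ i ∈ X, y i}

/-- exchange from an integral point towards a real point of the
base-polyhedron. -/
theorem stmt_3 {N : Type*} [Fintype N] [DecidableEq N]
    (f : Finset N → ℤ)
    (hsuper : ∀ X Y : Finset N, f X + f Y ≤ f (X ∪ Y) + f (X ∩ Y))
    (hf0 : f ∅ = 0)
    (x : N → ℤ) (hx : x ∈ MSet f) (y : N → ℝ) (hy : y ∈ basePoly f)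
    (i : N) (hi : y i < (x i : ℝ)) :
    ∃ j : N, (x j : ℝ) < y j ∧
      (fun k => x k - (if k = i then 1 else 0) + (if k = j then 1 else 0)) ∈ MSet f := by
  obtain ⟨hx1, hx2⟩ := hx
  obtain ⟨hy1, hy2⟩ := hy
  classical
  -- the set of tight sets containing i
  set s : Set (Finset N) := {X | i ∈ X ∧ f X = ∑ k ∈ X, x k} with hs
  have hclosed : ∀ X ∈ s, ∀ Y ∈ s, X ⊓ Y ∈ s := by
    rintro X ⟨hiX, hXt⟩ Y ⟨hiY, hYt⟩
    have h1 := hsuper X Y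
    have h2 := hx2 (X ∪ Y)
    have h3 := hx2 (X ∩ Y)
    have h4 : (∑ k ∈ X ∪ Y, x k) + ∑ k ∈ X ∩ Y, x k = (∑ k ∈ X, x k) + ∑ k ∈ Y, x k :=
      Finset.sum_union_inter
    refine ⟨Finset.mem_inter.2 ⟨hiX, hiY⟩, ?_⟩
    have h5 : f (X ∩ Y) = ∑ k ∈ X ∩ Y, x k := by omega
    simpa [Finset.inf_eq_inter] using h5
  set T : Finset (Finset N) :=
    Finset.univ.filter (fun X => i ∈ X ∧ f X = ∑ k ∈ X, x k) with hT
  have hTne : T.Nonempty := ⟨Finset.univ, by simp [hT, hx1.symm]⟩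
  set A : Finset N := T.inf' hTne id with hA
  have hAmem : A ∈ s := by
    refine Finset.inf'_mem s hclosed T hTne id ?_
    intro X hX
    simp only [hT, Finset.mem_filter] at hX
    exact ⟨hX.2.1, hX.2.2⟩
  obtain ⟨hiA, hAt⟩ := hAmem
  -- find j in A with x j < y j
  have hsum : (∑ k ∈ A.erase i, (x k : ℝ)) < ∑ k ∈ A.erase i, y k := by
    have hyA : (f A : ℝ) ≤ ∑ k ∈ A, y k := hy2 A
    have hxA : (f A : ℝ) = ∑ k ∈ A, (x k : ℝ) := by
      rw [hAt]; push_cast; ring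
    have e1 : (∑ k ∈ A.erase i, (x k : ℝ)) + x i = ∑ k ∈ A, (x k : ℝ) :=
      Finset.sum_erase_add A _ hiA
    have e2 : (∑ k ∈ A.erase i, y k) + y i = ∑ k ∈ A, y k :=
      Finset.sum_erase_add A _ hiA
    linarith
  obtain ⟨j, hjA', hj⟩ := Finset.exists_lt_of_sum_lt hsum
  have hjA : j ∈ A := Finset.mem_of_mem_erase hjA'
  have hji : j ≠ i := Finset.ne_of_mem_erase hjA'
  refine ⟨j, hj, ?_, ?_⟩
  · -- sum over univ
    simp [Finset.sum_add_distrib, Finset.sum_sub_distrib, Finset.sum_ite_eq',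
      hx1]
  · intro X
    have hX := hx2 X
    have hsplit : (∑ k ∈ X, (x k - (if k = i then 1 else 0) + (if k = j then 1 else 0)))
        = (∑ k ∈ X, x k) - (if i ∈ X then 1 else 0) + (if j ∈ X then 1 else 0) := by
      simp [Finset.sum_add_distrib, Finset.sum_sub_distrib, Finset.sum_ite_eq']
    rw [hsplit]
    by_cases hiX : i ∈ X
    · by_cases hjX : j ∈ X
      · simp [hiX, hjX]; omega
      · -- X is not tight
        have hnt : f X ≠ ∑ k ∈ X, x k := by
          intro htight
          have hXT : X ∈ T := by simp [hT, hiX, htight]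
          have : A ⊆ X := by
            have := Finset.inf'_le id hXT
            exact this
          exact hjX (this hjA)
        simp [hiX, hjX]; omega
    · by_cases hjX : j ∈ X <;> simp [hiX, hjX] <;> omega
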